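/- Let X be a finite set, Θ ⊆ ℝ^k open, θ ↦ p_θ a twice continuously differentiable family of strictly positive probability distributions on X, and λ : Θ → (0,∞) twice continuously differentiable. Fix α > 0, α ≠ 1, and set p̃_θ := λ(θ) p_θ with Bayesian I_α-divergence I_α(p̃_θ, p̃_{θ'}) := λ(θ) I_α(p_θ, p_{θ'}) + λ(θ) log(λ(θ)/λ(θ')) − λ(θ) + λ(θ'). Then for all i, j and all θ ∈ Θ, −(∂/∂θ'_j)(∂/∂θ_i) I_α(p̃_θ, p̃_{θ'}) evaluated at θ' = θ equals λ(θ) [ Cov_{p_θ^{(α)}}[∂_i log p_θ(X), ∂_j log p_θ(X)] + ∂_i log λ(θ) · ∂_j log λ(θ) ]. -/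

import Mathlib

open scoped BigOperators Topology Matrix
open Real MeasureTheory

noncomputable section

/-- Expectation of `A` under the weight/distribution `p` on a finite set. -/
def expct {X : Type*} [Fintype X] (p A : X → ℝ) : ℝ := ∑ x, p x * A x

/-- Covariance of `A` and `B` under `p`. -/
def covf {X : Type*} [Fintype X] (p A B : X → ℝ) : ℝ :=
  (∑ x, p x * A x * B x) - (∑ x, p x * A x) * (∑ x, p x * B x)

/-- Variance of `A` under `p`: `E_p[(A - E_p A)^2]`. -/
def varE {X : Type*} [Fintype X] (p A : X → ℝ) : ℝ :=
  ∑ x, p x * (A x - expct p A) ^ 2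

/-- The α-escort distribution of `p`. -/
def escort {X : Type*} [Fintype X] (α : ℝ) (p : X → ℝ) : X → ℝ :=
  fun x => p x ^ α / ∑ y, p y ^ α

/-- Partial derivative in the `i`-th coordinate direction. -/
def pderiv {m : ℕ} (i : Fin m) (f : (Fin m → ℝ) → ℝ) (θ : Fin m → ℝ) : ℝ :=
  fderiv ℝ f θ (Pi.single i 1)

/-- Covariance matrix of a vector-valued map `A` under `p`. -/
def covMatrix {X : Type*} [Fintype X] {m : ℕ} (p : X → ℝ) (A : X → Fin m → ℝ) :
    Matrix (Fin m) (Fin m) ℝ :=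
  Matrix.of fun i j => covf p (fun x => A x i) (fun x => A x j)

/-- The α-information matrix `G^{(α)}(θ)`. -/
def Galpha {X : Type*} [Fintype X] {m : ℕ} (α : ℝ) (p : (Fin m → ℝ) → X → ℝ)
    (θ : Fin m → ℝ) : Matrix (Fin m) (Fin m) ℝ :=
  Matrix.of fun i j =>
    covf (escort α (p θ)) (fun x => pderiv i (fun t => Real.log (p t x)) θ)
      (fun x => pderiv j (fun t => Real.log (p t x)) θ)

/-- The I_α-divergence (relative α-entropy). -/
def Ialpha {X : Type*} [Fintype X] (α : ℝ) (p q : X → ℝ) : ℝ :=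
  (1 / (1 - α)) * Real.log (∑ x, p x * q x ^ (α - 1))
    + (1 / α) * Real.log (∑ x, q x ^ α)
    - (1 / (α * (1 - α))) * Real.log (∑ x, p x ^ α)

/-- Generalized KL-divergence between positive measures on a finite set. -/
def genKL {X : Type*} [Fintype X] (pt qt : X → ℝ) : ℝ :=
  ∑ x, pt x * Real.log (pt x / qt x) - ∑ x, pt x + ∑ x, qt x

/-- The Fisher information matrix `G^{(e)}(θ)`. -/
def GeMat {X : Type*} [Fintype X] {k : ℕ} (p : (Fin k → ℝ) → X → ℝ) (θ : Fin k → ℝ) :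
    Matrix (Fin k) (Fin k) ℝ :=
  Matrix.of fun i j =>
    ∑ x, p θ x * pderiv i (fun t => Real.log (p t x)) θ * pderiv j (fun t => Real.log (p t x)) θ

/-- The prior matrix `J^λ(θ)` with entries `∂_i log λ · ∂_j log λ`. -/
def Jmat {k : ℕ} (lam : (Fin k → ℝ) → ℝ) (θ : Fin k → ℝ) : Matrix (Fin k) (Fin k) ℝ :=
  Matrix.of fun i j =>
    pderiv i (fun t => Real.log (lam t)) θ * pderiv j (fun t => Real.log (lam t)) θ

/-- The generalized Fisher matrix `G^{(f,F)}(θ)` of the escort model. -/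
def GFF {X : Type*} [Fintype X] {k : ℕ} (F : ℝ → ℝ) (p : (Fin k → ℝ) → X → ℝ)
    (θ : Fin k → ℝ) : Matrix (Fin k) (Fin k) ℝ :=
  Matrix.of fun i j =>
    ∑ x, F (p θ x) * pderiv i (fun t => Real.log (F (p t x))) θ
      * pderiv j (fun t => Real.log (F (p t x))) θ

/-- The generalized f-divergence `D_f^{(F)}(p,q)`. -/
def genDiv {X : Type*} [Fintype X] (f F : ℝ → ℝ) (p q : X → ℝ) : ℝ :=
  (1 / deriv (deriv f) 1) * ∑ x, F (q x) * f (F (p x) / F (q x))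

/-- The Bayesian I_α-divergence between `λ·p` and `μ·q`. -/
def IalphaB {X : Type*} [Fintype X] (α lam mu : ℝ) (p q : X → ℝ) : ℝ :=
  lam * Ialpha α p q + lam * Real.log (lam / mu) - lam + mu

/-- The open-simplex parametrization of distributions on a set with `d+1` points. -/
def simplexFam (d : ℕ) (θ : Fin d → ℝ) : Fin (d + 1) → ℝ :=
  fun x => if h : (x : ℕ) < d then θ ⟨x, h⟩ else 1 - ∑ i, θ i

set_option maxHeartbeats 1000000

/-- the Eguchi metric of the Bayesian I_α-divergence is
`λ(θ)[G^{(α)}(θ) + J^λ(θ)]`. -/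
theorem eguchi_metric_bayesian_Ialpha {X : Type*} [Fintype X] {k : ℕ}
    (Θ : Set (Fin k → ℝ)) (hΘ : IsOpen Θ)
    (p : (Fin k → ℝ) → X → ℝ)
    (hsmooth : ∀ x, ContDiffOn ℝ 2 (fun θ => p θ x) Θ)
    (hpos : ∀ θ ∈ Θ, ∀ x, 0 < p θ x)
    (hsum : ∀ θ ∈ Θ, ∑ x, p θ x = 1)
    (lam : (Fin k → ℝ) → ℝ) (hlams : ContDiffOn ℝ 2 lam Θ)
    (hlampos : ∀ θ ∈ Θ, 0 < lam θ)
    (α : ℝ) (hα : 0 < α) (hα1 : α ≠ 1) :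
    ∀ θ ∈ Θ, ∀ i j : Fin k,
      -(pderiv j (fun θ' => pderiv i (fun t =>
            lam t * Ialpha α (p t) (p θ')
              + lam t * Real.log (lam t / lam θ') - lam t + lam θ') θ) θ)
        = lam θ *
            (covf (escort α (p θ)) (fun x => pderiv i (fun t => Real.log (p t x)) θ)
                (fun x => pderiv j (fun t => Real.log (p t x)) θ)
              + pderiv i (fun t => Real.log (lam t)) θ
                * pderiv j (fun t => Real.log (lam t)) θ) := by
  intro θ hθ i j
  have hΘn : Θ ∈ 𝓝 θ := hΘ.mem_nhds hθ
  have hα0 : α ≠ 0 := ne_of_gt hα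
  have h1α : (1 : ℝ) - α ≠ 0 := sub_ne_zero.mpr (Ne.symm hα1)
  have hpdiff : ∀ (x : X), ∀ σ ∈ Θ, DifferentiableAt ℝ (fun t => p t x) σ := fun x σ hσ =>
    (((hsmooth x).contDiffAt (hΘ.mem_nhds hσ)).differentiableAt (by norm_num))
  have hldiff : ∀ σ ∈ Θ, DifferentiableAt ℝ lam σ := fun σ hσ =>
    ((hlams.contDiffAt (hΘ.mem_nhds hσ)).differentiableAt (by norm_num))
  set P : X → (Fin k → ℝ) →L[ℝ] ℝ := fun x => fderiv ℝ (fun t => p t x) θ with hPdef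
  have hP : ∀ x, HasFDerivAt (fun t => p t x) (P x) θ := fun x => (hpdiff x θ hθ).hasFDerivAt
  set L : (Fin k → ℝ) →L[ℝ] ℝ := fderiv ℝ lam θ with hLdef
  have hL : HasFDerivAt lam L θ := (hldiff θ hθ).hasFDerivAt
  have hlθ : 0 < lam θ := hlampos θ hθ
  have hpθ : ∀ x, 0 < p θ x := hpos θ hθ
  have hXne : Nonempty X := by
    rcases isEmpty_or_nonempty X with h | h
    · exfalso; have := hsum θ hθ; simp [Finset.univ_eq_empty] at this
    · exact h
  have hSpos : (0:ℝ) < ∑ x, p θ x ^ α :=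
    Finset.sum_pos (fun x _ => Real.rpow_pos_of_pos (hpθ x) α) Finset.univ_nonempty
  have keyA : ∀ θ' ∈ Θ, fderiv ℝ (fun t =>
      lam t * Ialpha α (p t) (p θ') + lam t * Real.log (lam t / lam θ') - lam t + lam θ') θ
        (Pi.single i 1)
      = L (Pi.single i 1) * Ialpha α (p θ) (p θ')
      + lam θ * ((1/(1-α)) * ((∑ x, p θ x * p θ' x ^ (α-1))⁻¹
            * ∑ x, p θ' x ^ (α-1) * P x (Pi.single i 1))
          - (1/(α*(1-α))) * ((∑ x, p θ x ^ α)⁻¹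
            * ∑ x, α * p θ x ^ (α-1) * P x (Pi.single i 1)))
      + L (Pi.single i 1) * (Real.log (lam θ) - Real.log (lam θ')) := by
    intro θ' hθ'
    have hpθ' : ∀ x, 0 < p θ' x := hpos θ' hθ'
    have hlθ' : 0 < lam θ' := hlampos θ' hθ'
    have hT : (0:ℝ) < ∑ x, p θ x * p θ' x ^ (α-1) :=
      Finset.sum_pos (fun x _ => mul_pos (hpθ x) (Real.rpow_pos_of_pos (hpθ' x) _))
        Finset.univ_nonempty
    have h1 : HasFDerivAt (fun t => ∑ x, p t x * p θ' x ^ (α-1))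
        (∑ x, (p θ' x ^ (α-1)) • P x) θ :=
      HasFDerivAt.fun_sum (fun x _ => (hP x).mul_const (p θ' x ^ (α-1)))
    have h2 : HasFDerivAt (fun t => ∑ x, p t x ^ α) (∑ x, (α * p θ x ^ (α-1)) • P x) θ :=
      HasFDerivAt.fun_sum (fun x _ =>
        by have h := (Real.hasDerivAt_rpow_const (p := α) (Or.inl (hpθ x).ne')).comp_hasFDerivAt θ (hP x); exact h)
    have hIa : HasFDerivAt (fun t => Ialpha α (p t) (p θ'))
        ((1/(1-α)) • ((∑ x, p θ x * p θ' x ^ (α-1))⁻¹ • ∑ x, (p θ' x ^ (α-1)) • P x)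
          - (1/(α*(1-α))) • ((∑ x, p θ x ^ α)⁻¹ • ∑ x, (α * p θ x ^ (α-1)) • P x)) θ := by
      simp only [Ialpha]
      exact (((h1.log hT.ne').const_mul (1/(1-α))).add_const
        ((1/α) * Real.log (∑ x, p θ' x ^ α))).sub ((h2.log hSpos.ne').const_mul _)
    have hdiv : HasFDerivAt (fun t => lam t / lam θ') ((lam θ')⁻¹ • L) θ := by
      simpa only [div_eq_mul_inv] using hL.mul_const (lam θ')⁻¹
    have hlog : HasFDerivAt (fun t => Real.log (lam t / lam θ'))
        ((lam θ / lam θ')⁻¹ • (lam θ')⁻¹ • L) θ :=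
      hdiv.log (div_ne_zero hlθ.ne' hlθ'.ne')
    have htot := (((hL.fun_mul hIa).fun_add (hL.fun_mul hlog)).fun_sub hL).add_const (lam θ')
    rw [htot.fderiv]
    simp only [ContinuousLinearMap.add_apply, ContinuousLinearMap.sub_apply,
      ContinuousLinearMap.coe_smul', Pi.smul_apply, smul_eq_mul,
      ContinuousLinearMap.sum_apply]
    rw [Real.log_div hlθ.ne' hlθ'.ne']
    have hcan : lam θ * ((lam θ / lam θ')⁻¹ * ((lam θ')⁻¹ * L (Pi.single i 1)))
        = L (Pi.single i 1) := by
      field_simp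
    rw [hcan]; ring
  have hEq : (fun θ' => fderiv ℝ (fun t =>
      lam t * Ialpha α (p t) (p θ') + lam t * Real.log (lam t / lam θ') - lam t + lam θ') θ
        (Pi.single i 1))
      =ᶠ[𝓝 θ] (fun θ' => L (Pi.single i 1) * Ialpha α (p θ) (p θ')
      + lam θ * ((1/(1-α)) * ((∑ x, p θ x * p θ' x ^ (α-1))⁻¹
            * ∑ x, p θ' x ^ (α-1) * P x (Pi.single i 1))
          - (1/(α*(1-α))) * ((∑ x, p θ x ^ α)⁻¹
            * ∑ x, α * p θ x ^ (α-1) * P x (Pi.single i 1)))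
      + L (Pi.single i 1) * (Real.log (lam θ) - Real.log (lam θ'))) :=
    Filter.eventuallyEq_of_mem hΘn keyA
  have hq1 : ∀ x : X, HasFDerivAt (fun θ' => p θ' x ^ (α-1))
      (((α-1) * p θ x ^ (α-1-1)) • P x) θ := fun x =>
    by have h := (Real.hasDerivAt_rpow_const (p := α-1) (Or.inl (hpθ x).ne')).comp_hasFDerivAt θ (hP x); exact h
  have hU : HasFDerivAt (fun θ' => ∑ x, p θ' x ^ (α-1) * P x (Pi.single i 1))
      (∑ x, (P x (Pi.single i 1)) • (((α-1) * p θ x ^ (α-1-1)) • P x)) θ :=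
    HasFDerivAt.fun_sum (fun x _ => (hq1 x).mul_const _)
  have hT2 : HasFDerivAt (fun θ' => ∑ x, p θ x * p θ' x ^ (α-1))
      (∑ x, (p θ x) • (((α-1) * p θ x ^ (α-1-1)) • P x)) θ :=
    HasFDerivAt.fun_sum (fun x _ => (hq1 x).const_mul _)
  have hS2 : HasFDerivAt (fun θ' => ∑ x, p θ' x ^ α) (∑ x, (α * p θ x ^ (α-1)) • P x) θ :=
    HasFDerivAt.fun_sum (fun x _ =>
      by have h := (Real.hasDerivAt_rpow_const (p := α) (Or.inl (hpθ x).ne')).comp_hasFDerivAt θ (hP x); exact h)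
  have hTθpos : (0:ℝ) < ∑ x, p θ x * p θ x ^ (α-1) :=
    Finset.sum_pos (fun x _ => mul_pos (hpθ x) (Real.rpow_pos_of_pos (hpθ x) _))
      Finset.univ_nonempty
  have hIa2 : HasFDerivAt (fun θ' => Ialpha α (p θ) (p θ'))
      ((1/(1-α)) • ((∑ x, p θ x * p θ x ^ (α-1))⁻¹
          • ∑ x, (p θ x) • (((α-1) * p θ x ^ (α-1-1)) • P x))
        + (1/α) • ((∑ x, p θ x ^ α)⁻¹ • ∑ x, (α * p θ x ^ (α-1)) • P x)) θ := by
    simp only [Ialpha]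
    exact (((hT2.log hTθpos.ne').const_mul (1/(1-α))).add
      ((hS2.log hSpos.ne').const_mul (1/α))).sub_const _
  have hinv : HasFDerivAt (fun θ' => (∑ x, p θ x * p θ' x ^ (α-1))⁻¹)
      ((-(((∑ x, p θ x * p θ x ^ (α-1))) ^ 2)⁻¹)
        • (∑ x, (p θ x) • (((α-1) * p θ x ^ (α-1-1)) • P x))) θ :=
    (hasDerivAt_inv hTθpos.ne').comp_hasFDerivAt θ hT2
  have hUT := hinv.fun_mul hU
  have hloglam : HasFDerivAt (fun θ' => Real.log (lam θ) - Real.log (lam θ'))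
      ((0 : (Fin k → ℝ) →L[ℝ] ℝ) - (lam θ)⁻¹ • L) θ :=
    (hasFDerivAt_const _ _).sub (hL.log hlθ.ne')
  have hG := ((hIa2.const_mul (L (Pi.single i 1))).fun_add
      (((hUT.const_mul (1/(1-α))).sub_const
        ((1/(α*(1-α))) * ((∑ x, p θ x ^ α)⁻¹
          * ∑ x, α * p θ x ^ (α-1) * P x (Pi.single i 1)))).const_mul (lam θ))).fun_add
      (hloglam.const_mul (L (Pi.single i 1)))
  have hlogp : ∀ x : X, fderiv ℝ (fun t => Real.log (p t x)) θ = (p θ x)⁻¹ • P x :=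
    fun x => ((hP x).log (hpθ x).ne').fderiv
  have hloglamf : fderiv ℝ (fun t => Real.log (lam t)) θ = (lam θ)⁻¹ • L :=
    (hL.log hlθ.ne').fderiv
  simp only [pderiv]
  rw [hEq.fderiv_eq, hG.fderiv]
  simp only [covf, escort, hlogp, hloglamf, ContinuousLinearMap.add_apply,
    ContinuousLinearMap.sub_apply, ContinuousLinearMap.coe_smul', Pi.smul_apply,
    smul_eq_mul, ContinuousLinearMap.sum_apply, ContinuousLinearMap.zero_apply]
  have hps : ∀ x : X, p θ x ^ α = p θ x ^ (α-1) * p θ x := fun x => by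
    have h := Real.rpow_add_one (hpθ x).ne' (α-1)
    rw [show α-1+1 = α by ring] at h
    exact h
  have hps2 : ∀ x : X, p θ x ^ (α-1) = p θ x ^ (α-1-1) * p θ x := fun x => by
    have h := Real.rpow_add_one (hpθ x).ne' (α-1-1)
    rw [show α-1-1+1 = α-1 by ring] at h
    exact h
  have e1 : ∑ x, p θ x * p θ x ^ (α-1) = ∑ x, p θ x ^ α :=
    Finset.sum_congr rfl fun x _ => by rw [hps x]; ring
  have e2 : ∑ x, p θ x * ((α-1) * p θ x ^ (α-1-1) * (P x) (Pi.single j 1))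
      = (α-1) * ∑ x, p θ x ^ (α-1) * (P x) (Pi.single j 1) := by
    rw [Finset.mul_sum]
    exact Finset.sum_congr rfl fun x _ => by rw [hps2 x]; ring
  have e3 : ∑ x, α * p θ x ^ (α-1) * (P x) (Pi.single j 1)
      = α * ∑ x, p θ x ^ (α-1) * (P x) (Pi.single j 1) := by
    rw [Finset.mul_sum]
    exact Finset.sum_congr rfl fun x _ => by ring
  have e4 : ∑ x, (P x) (Pi.single i 1) * ((α-1) * p θ x ^ (α-1-1) * (P x) (Pi.single j 1))
      = (α-1) * ∑ x, p θ x ^ (α-1-1) * ((P x) (Pi.single i 1) * (P x) (Pi.single j 1)) := by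
    rw [Finset.mul_sum]
    exact Finset.sum_congr rfl fun x _ => by ring
  have e5 : ∑ x, (p θ x ^ α / ∑ y, p θ y ^ α) * ((p θ x)⁻¹ * (P x) (Pi.single i 1))
        * ((p θ x)⁻¹ * (P x) (Pi.single j 1))
      = (∑ x, p θ x ^ (α-1-1) * ((P x) (Pi.single i 1) * (P x) (Pi.single j 1)))
        / ∑ y, p θ y ^ α := by
    rw [Finset.sum_div]
    refine Finset.sum_congr rfl fun x _ => ?_
    rw [hps x, hps2 x]
    have hc : p θ x * (p θ x)⁻¹ = 1 := mul_inv_cancel₀ (hpθ x).ne'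
    linear_combination ((p θ x ^ (α-1-1) * ((P x) (Pi.single i 1) * (P x) (Pi.single j 1))
      / ∑ y, p θ y ^ α) * (p θ x * (p θ x)⁻¹ + 1)) * hc
  have e6 : ∀ v : Fin k → ℝ, ∑ x, (p θ x ^ α / ∑ y, p θ y ^ α) * ((p θ x)⁻¹ * (P x) v)
      = (∑ x, p θ x ^ (α-1) * (P x) v) / ∑ y, p θ y ^ α := by
    intro v
    rw [Finset.sum_div]
    refine Finset.sum_congr rfl fun x _ => ?_
    rw [hps x]
    have hc : p θ x * (p θ x)⁻¹ = 1 := mul_inv_cancel₀ (hpθ x).ne'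
    linear_combination (p θ x ^ (α-1) * (P x) v / ∑ y, p θ y ^ α) * hc
  rw [e1, e2, e3, e4, e5, e6, e6]
  have hVi := (∑ x, p θ x ^ (α-1) * (P x) (Pi.single i 1))
  field_simp
  ring
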